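/- If P is a path on n ≥ 5 vertices, then the complement of P has diameter 2, and hence rvc(complement of P) = 1; consequently rvc(P) + rvc(complement of P) = n − 1. -/

import Mathlib

open SimpleGraph

/-- A coloring `c` (using colors `< k`) makes `G` rainbow vertex-connected: every pair of
vertices is joined by a path whose internal vertices receive distinct colors (all `< k`). -/
def IsRainbowVCColoring {V : Type*} (G : SimpleGraph V) (c : V → ℕ) (k : ℕ) : Prop :=
  ∀ u v : V, ∃ p : G.Walk u v, p.IsPath ∧
    (p.support.tail.dropLast.map c).Nodup ∧
    ∀ x ∈ p.support.tail.dropLast, c x < k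

/-- The rainbow vertex-connection number: the least number of colors making `G`
rainbow vertex-connected. -/
noncomputable def rvc {V : Type*} (G : SimpleGraph V) : ℕ :=
  sInf {k | ∃ c : V → ℕ, IsRainbowVCColoring G c k}

namespace RVCAux

/-! ### List lemmas -/

lemma dropLast_tail_comm {α : Type*} (l : List α) : l.dropLast.tail = l.tail.dropLast := by
  cases l with
  | nil => rfl
  | cons a t =>
    cases t with
    | nil => rfl
    | cons b s => simp [List.dropLast_cons₂]

lemma dropLast_reverse' {α : Type*} (l : List α) : l.reverse.dropLast = l.tail.reverse := by
  have h := List.tail_reverse (l := l.reverse)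
  rw [List.reverse_reverse] at h
  rw [← List.reverse_reverse (l.reverse.dropLast), ← h]

lemma reverse_tail_dropLast {α : Type*} (l : List α) :
    l.reverse.tail.dropLast = l.tail.dropLast.reverse := by
  rw [List.tail_reverse, dropLast_reverse', dropLast_tail_comm]

lemma tail_range' (s m : ℕ) : (List.range' s m).tail = List.range' (s + 1) (m - 1) := by
  cases m with
  | zero => rfl
  | succ k => rw [List.range'_succ]; rfl

lemma dropLast_range' (s m : ℕ) : (List.range' s m).dropLast = List.range' s (m - 1) := by
  cases m with
  | zero => rfl
  | succ k => rw [List.range'_concat, List.dropLast_concat]; rfl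

lemma map_sub_one_range' (s m : ℕ) :
    (List.range' (s + 1) m).map (fun x => x - 1) = List.range' s m := by
  induction m generalizing s with
  | zero => rfl
  | succ k ih =>
    rw [List.range'_succ, List.range'_succ, List.map_cons, ih (s + 1)]
    simp

lemma getLast?_cons_of_ne_nil {α : Type*} (a : α) {l : List α} (h : l ≠ []) :
    (a :: l).getLast? = l.getLast? := by
  cases l with
  | nil => exact absurd rfl h
  | cons b s => rw [List.getLast?_cons_cons]

lemma mem_dropLast_of_getLast? {α : Type*} {x v : α} (hxv : x ≠ v) :
    ∀ (l : List α), x ∈ l → l.getLast? = some v → x ∈ l.dropLast := by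
  intro l
  induction l with
  | nil => simp
  | cons a s ih =>
    intro hx hl
    cases s with
    | nil =>
      simp only [List.mem_singleton] at hx
      simp only [List.getLast?_singleton, Option.some.injEq] at hl
      exact absurd (hx.trans hl) hxv
    | cons b s' =>
      rw [List.getLast?_cons_cons] at hl
      rw [List.dropLast_cons₂]
      rcases List.mem_cons.mp hx with h | h
      · exact h ▸ List.mem_cons_self
      · exact List.mem_cons_of_mem _ (ih h hl)

/-! ### The ascending walk in the path graph -/

def asc (n a b : ℕ) (hab : a ≤ b) (hb : b < n) :
    (pathGraph n).Walk ⟨a, by omega⟩ ⟨b, hb⟩ :=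
  if h : a = b then by subst h; exact Walk.nil
  else
    have hlt : a + 1 < n := by omega
    Walk.cons (v := ⟨a + 1, hlt⟩)
      (by rw [pathGraph_adj]; left; rfl)
      (asc n (a + 1) b (by omega) hb)
termination_by b - a

lemma asc_support (n a b : ℕ) (hab : a ≤ b) (hb : b < n) :
    (asc n a b hab hb).support.map Fin.val = List.range' a (b + 1 - a) := by
  rw [asc]
  split
  · rename_i h
    subst h
    simp [show a + 1 - a = 1 by omega, List.range'_succ]
  · rename_i h
    rw [Walk.support_cons, List.map_cons, asc_support n (a + 1) b (by omega) hb,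
      show b + 1 - a = (b - a) + 1 by omega, List.range'_succ,
      show b + 1 - (a + 1) = b - a by omega]
termination_by b - a

lemma good_path (n : ℕ) (hn : 3 ≤ n) (u v : Fin n) (huv : u.val ≤ v.val) :
    ∃ p : (pathGraph n).Walk u v, p.IsPath ∧
      ((p.support.tail.dropLast.map fun i : Fin n => i.val - 1).Nodup) ∧
      ∀ x ∈ p.support.tail.dropLast, (x : ℕ) - 1 < n - 2 := by
  let p : (pathGraph n).Walk u v := asc n u.val v.val huv v.isLt
  have hs : p.support.map Fin.val = List.range' u.val (v.val + 1 - u.val) :=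
    asc_support n u.val v.val huv v.isLt
  have hmapnd : (p.support.map Fin.val).Nodup := by
    rw [hs]; exact List.nodup_range'
  have hnd : p.support.Nodup := hmapnd.of_map _
  have hI : p.support.tail.dropLast.map Fin.val
      = List.range' (u.val + 1) (v.val - u.val - 1) := by
    rw [List.map_dropLast, List.map_tail, hs, tail_range', dropLast_range']
    congr 1
    omega
  refine ⟨p, p.isPath_def.mpr hnd, ?_, ?_⟩
  · rw [show (fun i : Fin n => i.val - 1) = (fun x => x - 1) ∘ Fin.val from rfl,
      ← List.map_map, hI, map_sub_one_range']
    exact List.nodup_range'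
  · intro x hx
    have hm : x.val ∈ List.range' (u.val + 1) (v.val - u.val - 1) := by
      rw [← hI]; exact List.mem_map_of_mem (f := Fin.val) hx
    obtain ⟨i, hi, hx'⟩ := List.mem_range'.mp hm
    have := v.isLt
    omega

lemma mem_support_of_between {n : ℕ} :
    ∀ {u v : Fin n} (p : (pathGraph n).Walk u v) (w : Fin n),
      ((u.val ≤ w.val ∧ w.val ≤ v.val) ∨ (v.val ≤ w.val ∧ w.val ≤ u.val)) →
      w ∈ p.support := by
  intro u v p
  induction p with
  | nil =>
    intro w hw
    rename_i a
    have : w = a := Fin.ext (by omega)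
    simp [this]
  | cons h q ih =>
    rename_i a x b
    intro w hw
    rw [Walk.support_cons]
    by_cases hx : (x.val ≤ w.val ∧ w.val ≤ b.val) ∨ (b.val ≤ w.val ∧ w.val ≤ x.val)
    · exact List.mem_cons_of_mem _ (ih w hx)
    · have hadj := pathGraph_adj.mp h
      have : w = a := Fin.ext (by omega)
      simp [this]

lemma exists_common (n : ℕ) (hn : 5 ≤ n) (u v : Fin n)
    (h : ¬(pathGraph n)ᶜ.Adj u v) :
    ∃ w : Fin n, (pathGraph n)ᶜ.Adj u w ∧ (pathGraph n)ᶜ.Adj w v := by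
  have hrel : u.val = v.val ∨ u.val + 1 = v.val ∨ v.val + 1 = u.val := by
    rw [compl_adj, not_and_or] at h
    rcases h with h | h
    · left; exact congrArg Fin.val (not_ne_iff.mp h)
    · rcases pathGraph_adj.mp (not_not.mp h) with h | h
      · right; left; exact h
      · right; right; exact h
  by_cases hc : max u.val v.val + 2 < n
  · refine ⟨⟨max u.val v.val + 2, hc⟩, ?_, ?_⟩ <;>
    · rw [compl_adj, pathGraph_adj]
      constructor
      · simp only [ne_eq, Fin.ext_iff, Fin.val_mk]
        omega
      · simp only [Fin.val_mk]
        omega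
  · have hm2 : 2 ≤ min u.val v.val := by
      have := u.isLt; have := v.isLt; omega
    refine ⟨⟨min u.val v.val - 2, by have := u.isLt; have := v.isLt; omega⟩, ?_, ?_⟩ <;>
    · rw [compl_adj, pathGraph_adj]
      constructor
      · simp only [ne_eq, Fin.ext_iff, Fin.val_mk]
        omega
      · simp only [Fin.val_mk]
        omega

/-! ### rvc of the path graph -/

lemma path_rvc_mem (n : ℕ) (hn : 5 ≤ n) :
    ∃ c : Fin n → ℕ, IsRainbowVCColoring (pathGraph n) c (n - 2) := by
  refine ⟨fun i => i.val - 1, fun u v => ?_⟩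
  rcases le_total u.val v.val with h | h
  · exact good_path n (by omega) u v h
  · obtain ⟨p, h1, h2, h3⟩ := good_path n (by omega) v u h
    refine ⟨p.reverse, h1.reverse, ?_, ?_⟩
    · rw [Walk.support_reverse, reverse_tail_dropLast, List.map_reverse]
      exact List.nodup_reverse.mpr h2
    · intro x hx
      rw [Walk.support_reverse, reverse_tail_dropLast, List.mem_reverse] at hx
      exact h3 x hx

lemma path_rvc_lb (n : ℕ) (hn : 5 ≤ n) (k : ℕ) (c : Fin n → ℕ)
    (hc : IsRainbowVCColoring (pathGraph n) c k) : n - 2 ≤ k := by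
  classical
  obtain ⟨p, hp, hnd, hlt⟩ := hc ⟨0, by omega⟩ ⟨n - 1, by omega⟩
  set I := p.support.tail.dropLast with hIdef
  have hmem : ∀ w : Fin n, 1 ≤ w.val → w.val ≤ n - 2 → w ∈ I := by
    intro w h1 h2
    have hw := w.isLt
    have hsup : w ∈ p.support :=
      mem_support_of_between p w (Or.inl ⟨by simp only [Fin.val_mk]; omega,
        by simp only [Fin.val_mk]; omega⟩)
    have hwt : w ∈ p.support.tail := by
      rw [Walk.support_eq_cons] at hsup
      rcases List.mem_cons.mp hsup with heq | hm
      · exact absurd (congrArg Fin.val heq) (by simp only [Fin.val_mk]; omega)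
      · exact hm
    have htne : p.support.tail ≠ [] := List.ne_nil_of_mem hwt
    have hlast : p.support.tail.getLast? = some ⟨n - 1, by omega⟩ := by
      rw [← getLast?_cons_of_ne_nil (⟨0, by omega⟩ : Fin n) htne, ← Walk.support_eq_cons,
        List.getLast?_eq_getLast p.support_ne_nil, p.getLast_support]
    exact mem_dropLast_of_getLast?
      (by intro heq; exact absurd (congrArg Fin.val heq) (by simp only [Fin.val_mk]; omega))
      _ hwt hlast
  have hcard : n - 2 ≤ I.length := by
    have hstep : (Finset.univ : Finset (Fin (n - 2))).card ≤ I.toFinset.card := by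
      apply Finset.card_le_card_of_injOn (fun i => (⟨i.val + 1, by omega⟩ : Fin n))
      · intro i _
        exact List.mem_toFinset.mpr (hmem _ (by simp only [Fin.val_mk]; omega)
          (by simp only [Fin.val_mk]; have := i.isLt; omega))
      · intro a _ b _ hab
        have := congrArg Fin.val hab
        simp only [Fin.val_mk] at this
        exact Fin.ext (by omega)
    calc n - 2 = (Finset.univ : Finset (Fin (n - 2))).card := by simp
      _ ≤ I.toFinset.card := hstep
      _ ≤ I.length := List.toFinset_card_le I
  have hsub : (I.map c).toFinset ⊆ Finset.range k := by
    intro x hx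
    rw [List.mem_toFinset] at hx
    obtain ⟨y, hy, rfl⟩ := List.mem_map.mp hx
    exact Finset.mem_range.mpr (hlt y hy)
  have hfin : I.length ≤ k := by
    calc I.length = (I.map c).length := (List.length_map _).symm
      _ = (I.map c).toFinset.card := (List.toFinset_card_of_nodup hnd).symm
      _ ≤ (Finset.range k).card := Finset.card_le_card hsub
      _ = k := Finset.card_range k
  omega

/-! ### rvc of the complement -/

lemma compl_rvc_mem (n : ℕ) (hn : 5 ≤ n) :
    ∃ c : Fin n → ℕ, IsRainbowVCColoring (pathGraph n)ᶜ c 1 := by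
  refine ⟨fun _ => 0, fun u v => ?_⟩
  by_cases huv : u = v
  · subst huv
    exact ⟨Walk.nil, Walk.IsPath.nil, by simp, by simp⟩
  by_cases ha : (pathGraph n)ᶜ.Adj u v
  · refine ⟨Walk.cons ha Walk.nil, ?_, by simp, by simp⟩
    rw [Walk.isPath_def]
    simp [ha.ne]
  · obtain ⟨w, h1, h2⟩ := exists_common n hn u v ha
    refine ⟨Walk.cons h1 (Walk.cons h2 Walk.nil), ?_, by simp, by simp⟩
    rw [Walk.isPath_def]
    simp [h1.ne, h2.ne, huv]

lemma compl_rvc_nonzero (n : ℕ) (hn : 5 ≤ n) (c : Fin n → ℕ)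
    (hc : IsRainbowVCColoring (pathGraph n)ᶜ c 0) : False := by
  obtain ⟨p, hp, -, hlt⟩ := hc ⟨0, by omega⟩ ⟨1, by omega⟩
  have hne : (⟨0, by omega⟩ : Fin n) ≠ ⟨1, by omega⟩ := by
    intro heq
    exact absurd (congrArg Fin.val heq) (by simp only [Fin.val_mk]; omega)
  have hempty : p.support.tail.dropLast = [] :=
    List.eq_nil_iff_forall_not_mem.mpr (fun x hx => absurd (hlt x hx) (Nat.not_lt_zero _))
  have hlen : p.length ≤ 1 := by
    have h1 := p.length_support
    have h2 : p.support.tail.dropLast.length = 0 := by rw [hempty]; rfl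
    rw [List.length_dropLast, List.length_tail, h1] at h2
    omega
  interval_cases h : p.length
  · exact hne (Walk.eq_of_length_eq_zero h)
  · have hadj := Walk.adj_of_length_eq_one h
    rw [compl_adj] at hadj
    exact hadj.2 (pathGraph_adj.mpr (Or.inl (by simp only [Fin.val_mk])))

end RVCAux

theorem pathGraph_compl (n : ℕ) (hn : 5 ≤ n) :
    (SimpleGraph.pathGraph n)ᶜ.diam = 2 ∧ rvc (SimpleGraph.pathGraph n)ᶜ = 1 ∧
    rvc (SimpleGraph.pathGraph n) + rvc (SimpleGraph.pathGraph n)ᶜ = n - 1 := by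
  have hediam : (pathGraph n)ᶜ.ediam = 2 := by
    apply le_antisymm
    · apply ediam_le_of_edist_le
      intro u v
      by_cases huv : u = v
      · subst huv; simp [edist_self]
      by_cases ha : (pathGraph n)ᶜ.Adj u v
      · calc (pathGraph n)ᶜ.edist u v ≤ (Walk.cons ha Walk.nil).length := edist_le _
          _ ≤ 2 := by norm_num
      · obtain ⟨w, h1, h2⟩ := RVCAux.exists_common n hn u v ha
        calc (pathGraph n)ᶜ.edist u v ≤ (Walk.cons h1 (Walk.cons h2 Walk.nil)).length :=
              edist_le _
          _ ≤ 2 := by norm_num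
    · have hne : (⟨0, by omega⟩ : Fin n) ≠ ⟨1, by omega⟩ := by
        intro heq
        exact absurd (congrArg Fin.val heq) (by simp only [Fin.val_mk]; omega)
      have hnadj : ¬(pathGraph n)ᶜ.Adj ⟨0, by omega⟩ ⟨1, by omega⟩ := by
        rw [compl_adj]
        intro hh
        exact hh.2 (pathGraph_adj.mpr (Or.inl (by simp only [Fin.val_mk])))
      set e := (pathGraph n)ᶜ.edist ⟨0, by omega⟩ ⟨1, by omega⟩ with hee
      have h1 : e ≠ 0 := by
        rw [hee, ne_eq, edist_eq_zero_iff]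
        exact hne
      have h2 : e ≠ 1 := fun hh => hnadj (edist_eq_one_iff_adj.mp (hee ▸ hh))
      have hpos : 0 < e := pos_iff_ne_zero.mpr h1
      have hlt : 1 < e := lt_of_le_of_ne (Order.one_le_iff_pos.mpr hpos) (Ne.symm h2)
      calc (2 : ℕ∞) = 1 + 1 := by norm_num
        _ ≤ e := (ENat.add_one_le_iff (by simp)).mpr hlt
        _ ≤ (pathGraph n)ᶜ.ediam := edist_le_ediam
  have hdiam : (pathGraph n)ᶜ.diam = 2 := by
    rw [SimpleGraph.diam, hediam]
    rfl
  have hrvc_compl : rvc (pathGraph n)ᶜ = 1 := by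
    have hmem : (1 : ℕ) ∈ {k | ∃ c : Fin n → ℕ, IsRainbowVCColoring (pathGraph n)ᶜ c k} :=
      RVCAux.compl_rvc_mem n hn
    rw [rvc]
    refine le_antisymm (Nat.sInf_le hmem) (le_csInf ⟨1, hmem⟩ ?_)
    intro b hb
    rcases Nat.eq_zero_or_pos b with rfl | hbpos
    · obtain ⟨c, hc⟩ := hb
      exact absurd (RVCAux.compl_rvc_nonzero n hn c hc) not_false
    · exact hbpos
  have hrvc_path : rvc (pathGraph n) = n - 2 := by
    have hmem : (n - 2 : ℕ) ∈ {k | ∃ c : Fin n → ℕ, IsRainbowVCColoring (pathGraph n) c k} :=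
      RVCAux.path_rvc_mem n hn
    rw [rvc]
    refine le_antisymm (Nat.sInf_le hmem) (le_csInf ⟨n - 2, hmem⟩ ?_)
    intro b hb
    obtain ⟨c, hc⟩ := hb
    exact RVCAux.path_rvc_lb n hn b c hc
  exact ⟨hdiam, hrvc_compl, by rw [hrvc_path, hrvc_compl]; omega⟩
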